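/- For every natural number n ≥ 1 and every real φ such that nφ is not an integer multiple of π, one has ∑_{l=0}^{n-1} cot²(φ + πl/n) = n²·csc²(nφ) − n. -/

import Mathlib

open Real Finset

-- z^m ≠ 1 for m not a multiple of n
lemma zpow_ne_one (n m : ℕ) (hn : 1 ≤ n) (hm1 : 0 < m) (hm2 : m < 2*n) (hmn : m ≠ n) :
    Complex.exp (2*π*Complex.I/n) ^ m ≠ 1 := by
  rw [← Complex.exp_nat_mul]
  intro hx
  rw [Complex.exp_eq_one_iff] at hx
  obtain ⟨k, hk⟩ := hx
  have hn0 : (n:ℂ) ≠ 0 := Nat.cast_ne_zero.mpr (by omega)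
  have hπ : (π:ℂ) ≠ 0 := Complex.ofReal_ne_zero.mpr Real.pi_ne_zero
  have hc : (2*π*Complex.I/(n:ℂ)) ≠ 0 := by
    apply div_ne_zero _ hn0
    simp [hπ, Complex.I_ne_zero]
  have h2 : (m:ℂ) = (k:ℂ)*(n:ℂ) := by
    apply mul_right_cancel₀ hc
    rw [hk]; field_simp
  have h3 : (m:ℤ) = k * n := by exact_mod_cast h2
  have hm1' : (0:ℤ) < m := by exact_mod_cast hm1
  have hm2' : (m:ℤ) < 2*n := by exact_mod_cast hm2
  have hn' : (1:ℤ) ≤ n := by exact_mod_cast hn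
  have hk1 : 1 ≤ k := by nlinarith
  have hk2 : k ≤ 1 := by nlinarith
  have : k = 1 := le_antisymm hk2 hk1
  subst this
  simp at h3
  exact hmn (by exact_mod_cast h3)

lemma key_sum (n : ℕ) (hn : 1 ≤ n) (w : ℂ) (hw : w ^ n ≠ 1) :
    ∑ l ∈ range n, w * Complex.exp (2*π*Complex.I/n) ^ l /
      (w * Complex.exp (2*π*Complex.I/n) ^ l - 1) ^ 2
      = n ^ 2 * w ^ n / (w ^ n - 1) ^ 2 := by
  set z := Complex.exp (2*π*Complex.I/n) with hzdef
  have hn0 : (n:ℂ) ≠ 0 := Nat.cast_ne_zero.mpr (by omega)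
  have hz : z ^ n = 1 := by
    rw [hzdef, ← Complex.exp_nat_mul]
    rw [show (n:ℂ) * (2*π*Complex.I/n) = 2*π*Complex.I by field_simp]
    exact Complex.exp_two_pi_mul_I
  have hwn : w ^ n - 1 ≠ 0 := sub_ne_zero.mpr hw
  -- each root ≠ 1
  have ha : ∀ l, (w * z ^ l) ^ n = w ^ n := by
    intro l
    rw [mul_pow, ← pow_mul, mul_comm l n, pow_mul, hz, one_pow, mul_one]
  have ha1 : ∀ l, w * z ^ l - 1 ≠ 0 := by
    intro l
    rw [sub_ne_zero]
    intro hl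
    exact hw (by rw [← ha l, hl, one_pow])
  -- rewrite each term
  have step1 : ∀ l ∈ range n, w * z ^ l / (w * z ^ l - 1) ^ 2
      = w * z ^ l * (∑ k ∈ range n, (w * z ^ l) ^ k) ^ 2 / (w ^ n - 1) ^ 2 := by
    intro l _
    have hgeom : (∑ k ∈ range n, (w * z ^ l) ^ k) * (w * z ^ l - 1) = w ^ n - 1 := by
      rw [geom_sum_mul, ha l]
    rw [eq_div_iff (by rw [← hgeom]; exact pow_ne_zero 2 (mul_ne_zero (fun h0 => hwn (by rw [← hgeom, h0, zero_mul]) ) (ha1 l)))]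
    rw [← hgeom]
    field_simp [ha1 l]
  rw [Finset.sum_congr rfl step1, ← Finset.sum_div]
  -- now compute the numerator sum
  have main : ∑ l ∈ range n, w * z ^ l * (∑ k ∈ range n, (w * z ^ l) ^ k) ^ 2
      = n ^ 2 * w ^ n := by
    have expand : ∀ l, w * z ^ l * (∑ k ∈ range n, (w * z ^ l) ^ k) ^ 2
        = ∑ j ∈ range n, ∑ k ∈ range n, w ^ (j + k + 1) * (z ^ (j + k + 1)) ^ l := by
      intro l
      rw [sq, Finset.sum_mul_sum, Finset.mul_sum]
      apply Finset.sum_congr rfl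
      intro j _
      rw [Finset.mul_sum]
      apply Finset.sum_congr rfl
      intro k _
      rw [mul_pow, ← pow_mul]
      ring
    simp_rw [expand]
    rw [Finset.sum_comm]
    have inner : ∀ j ∈ range n, ∑ k ∈ range n, ∑ l ∈ range n,
        w ^ (j + k + 1) * (z ^ (j + k + 1)) ^ l = n * w ^ n := by
      intro j hj
      rw [Finset.mem_range] at hj
      have hterm : ∀ k ∈ range n, ∑ l ∈ range n, w ^ (j + k + 1) * (z ^ (j + k + 1)) ^ l
          = if k = n - 1 - j then (n : ℂ) * w ^ n else 0 := by
        intro k hk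
        rw [Finset.mem_range] at hk
        rw [← Finset.mul_sum]
        by_cases hcase : j + k + 1 = n
        · have hk' : k = n - 1 - j := by omega
          rw [if_pos hk']
          have hzm : z ^ (j + k + 1) = 1 := by rw [hcase, hz]
          rw [hzm, hcase]
          simp
          ring
        · rw [if_neg (by omega)]
          have hzm : z ^ (j + k + 1) ≠ 1 :=
            zpow_ne_one n (j + k + 1) hn (by omega) (by omega) hcase
          rw [geom_sum_eq hzm, ← pow_mul, mul_comm (j+k+1) n, pow_mul, hz, one_pow]
          simp
      rw [Finset.sum_congr rfl hterm, Finset.sum_ite_eq' (range n) (n - 1 - j)]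
      rw [if_pos (Finset.mem_range.mpr (by omega))]
    have inner2 : ∀ j ∈ range n, ∑ l ∈ range n, ∑ k ∈ range n,
        w ^ (j + k + 1) * (z ^ (j + k + 1)) ^ l = n * w ^ n := by
      intro j hj
      rw [Finset.sum_comm]
      exact inner j hj
    rw [Finset.sum_congr rfl inner2]
    simp
    ring
  rw [main]

lemma sin_sq_exp (θ : ℂ) :
    Complex.sin θ ^ 2 * (4 * Complex.exp (2*θ*Complex.I))
      = -(Complex.exp (2*θ*Complex.I) - 1) ^ 2 := by
  rw [Complex.sin]
  have h1 : Complex.exp (-θ*Complex.I) = (Complex.exp (θ*Complex.I))⁻¹ := by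
    rw [← Complex.exp_neg]; ring_nf
  have h2 : Complex.exp (2*θ*Complex.I) = Complex.exp (θ*Complex.I) ^ 2 := by
    rw [← Complex.exp_nat_mul]; ring_nf
  have hE : Complex.exp (θ*Complex.I) ≠ 0 := Complex.exp_ne_zero _
  rw [h1, h2]
  have hI : Complex.I ^ 2 = -1 := Complex.I_sq
  field_simp
  ring_nf
  rw [hI]  -- maybe needed
  ring

lemma cos_sq_exp (θ : ℂ) :
    Complex.cos θ ^ 2 * (4 * Complex.exp (2*θ*Complex.I))
      = (Complex.exp (2*θ*Complex.I) + 1) ^ 2 := by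
  rw [Complex.cos]
  have h1 : Complex.exp (-θ*Complex.I) = (Complex.exp (θ*Complex.I))⁻¹ := by
    rw [← Complex.exp_neg]; ring_nf
  have h2 : Complex.exp (2*θ*Complex.I) = Complex.exp (θ*Complex.I) ^ 2 := by
    rw [← Complex.exp_nat_mul]; ring_nf
  have hE : Complex.exp (θ*Complex.I) ≠ 0 := Complex.exp_ne_zero _
  rw [h1, h2]
  field_simp
  ring

lemma sin_ne_zero_of_exp (θ : ℂ) (ha : Complex.exp (2*θ*Complex.I) ≠ 1) :
    Complex.sin θ ≠ 0 := by
  intro h0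
  have hs := sin_sq_exp θ
  rw [h0] at hs
  have h1 : (Complex.exp (2*θ*Complex.I) - 1) ^ 2 = 0 := by linear_combination hs
  have h2 : Complex.exp (2*θ*Complex.I) - 1 = 0 :=
    pow_eq_zero_iff (by norm_num) |>.mp h1
  exact ha (sub_eq_zero.mp h2)

lemma cot_sq_exp (θ : ℂ) (ha : Complex.exp (2*θ*Complex.I) ≠ 1) :
    Complex.cot θ ^ 2 = -(Complex.exp (2*θ*Complex.I) + 1) ^ 2
      / (Complex.exp (2*θ*Complex.I) - 1) ^ 2 := by
  have hs := sin_sq_exp θ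
  have hc := cos_sq_exp θ
  have hsn := sin_ne_zero_of_exp θ ha
  have hE : Complex.exp (2*θ*Complex.I) ≠ 0 := Complex.exp_ne_zero _
  have hsub : Complex.exp (2*θ*Complex.I) - 1 ≠ 0 := sub_ne_zero.mpr ha
  rw [Complex.cot, div_pow]
  rw [div_eq_div_iff (pow_ne_zero 2 hsn) (pow_ne_zero 2 hsub)]
  have : Complex.cos θ ^2 * (4 * Complex.exp (2*θ*Complex.I)) * ((Complex.exp (2*θ*Complex.I) - 1) ^ 2)
      = -(Complex.exp (2*θ*Complex.I) + 1) ^ 2 * (Complex.sin θ ^2 * (4 * Complex.exp (2*θ*Complex.I))) := by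
    rw [hs, hc]; ring
  have h4 : (4 : ℂ) * Complex.exp (2*θ*Complex.I) ≠ 0 := by
    exact mul_ne_zero (by norm_num) hE
  apply mul_right_cancel₀ h4
  linear_combination this

lemma inv_sin_sq_exp (θ : ℂ) (ha : Complex.exp (2*θ*Complex.I) ≠ 1) :
    (Complex.sin θ)⁻¹ ^ 2 = -(4 * Complex.exp (2*θ*Complex.I))
      / (Complex.exp (2*θ*Complex.I) - 1) ^ 2 := by
  have hs := sin_sq_exp θ
  have hsn := sin_ne_zero_of_exp θ ha
  have hE : Complex.exp (2*θ*Complex.I) ≠ 0 := Complex.exp_ne_zero _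
  have hsub : Complex.exp (2*θ*Complex.I) - 1 ≠ 0 := sub_ne_zero.mpr ha
  rw [inv_pow, inv_eq_one_div, div_eq_div_iff (pow_ne_zero 2 hsn) (pow_ne_zero 2 hsub)]
  linear_combination hs

lemma z_pow_n (n : ℕ) (hn : 1 ≤ n) : Complex.exp (2*π*Complex.I/n) ^ n = 1 := by
  have hn0 : (n:ℂ) ≠ 0 := Nat.cast_ne_zero.mpr (by omega)
  rw [← Complex.exp_nat_mul]
  rw [show (n:ℂ) * (2*π*Complex.I/n) = 2*π*Complex.I by field_simp]
  exact Complex.exp_two_pi_mul_I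

theorem cot_sq_sum (n : ℕ) (hn : 1 ≤ n) (φ : ℝ)
    (h : ∀ k : ℤ, (n : ℝ) * φ ≠ k * π) :
    ∑ l ∈ Finset.range n, Real.cot (φ + π * l / n) ^ 2 =
      (n : ℝ) ^ 2 * (Real.sin (n * φ))⁻¹ ^ 2 - n := by
  have hn0 : (n:ℂ) ≠ 0 := Nat.cast_ne_zero.mpr (by omega)
  set w : ℂ := Complex.exp (2*(φ:ℂ)*Complex.I) with hw
  set z : ℂ := Complex.exp (2*(π:ℝ)*Complex.I/(n:ℂ)) with hzd
  have hz : z ^ n = 1 := z_pow_n n hn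
  have hu : Complex.exp (2*((n:ℂ)*(φ:ℂ))*Complex.I) = w ^ n := by
    rw [hw, ← Complex.exp_nat_mul]; ring_nf
  have hu1 : w ^ n ≠ 1 := by
    rw [← hu]
    intro hx
    rw [Complex.exp_eq_one_iff] at hx
    obtain ⟨k, hk⟩ := hx
    apply h k
    have h2I : (2:ℂ) * Complex.I ≠ 0 := by simp [Complex.I_ne_zero]
    have h2 : ((n:ℝ) * φ : ℝ) = ((k:ℝ) * π : ℝ) := by
      rw [← Complex.ofReal_inj]
      apply mul_right_cancel₀ h2I
      push_cast
      linear_combination hk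
    exact h2
  have hwn : w ^ n - 1 ≠ 0 := sub_ne_zero.mpr hu1
  have ha : ∀ l : ℕ, (w * z ^ l) ^ n = w ^ n := by
    intro l
    rw [mul_pow, ← pow_mul, mul_comm l n, pow_mul, hz, one_pow, mul_one]
  have ha1 : ∀ l : ℕ, w * z ^ l ≠ 1 := by
    intro l hl
    exact hu1 (by rw [← ha l, hl, one_pow])
  have hal : ∀ l : ℕ, Complex.exp (2*((φ:ℂ) + (π:ℝ)*(l:ℂ)/(n:ℂ))*Complex.I) = w * z ^ l := by
    intro l
    rw [hw, hzd, ← Complex.exp_nat_mul, ← Complex.exp_add]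
    congr 1
    field_simp
  have key : ∑ l ∈ range n, (Complex.cot ((φ:ℂ) + (π:ℝ)*(l:ℂ)/(n:ℂ)))^2
      = (n:ℂ)^2 * (Complex.sin ((n:ℂ)*(φ:ℂ)))⁻¹^2 - n := by
    have hterm : ∀ l ∈ range n, (Complex.cot ((φ:ℂ) + (π:ℝ)*(l:ℂ)/(n:ℂ)))^2
        = -1 - 4*(w*z^l/(w*z^l - 1)^2) := by
      intro l _
      rw [cot_sq_exp _ (by rw [hal l]; exact ha1 l), hal l]
      have hsub : w*z^l - 1 ≠ 0 := sub_ne_zero.mpr (ha1 l)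
      field_simp
      ring
    rw [Finset.sum_congr rfl hterm]
    rw [inv_sin_sq_exp _ (by rw [hu]; exact hu1), hu]
    have hsum := key_sum n hn w hu1
    rw [← hzd] at hsum
    rw [Finset.sum_sub_distrib, ← Finset.mul_sum, hsum]
    simp only [Finset.sum_const, Finset.card_range, nsmul_eq_mul]
    field_simp
    ring
  rw [← Complex.ofReal_inj]
  push_cast [Complex.ofReal_cot, Complex.ofReal_sin]
  convert key using 2
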